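/- Let d ≥ 1, 1 ≤ i ≤ d, and D ∈ ℕ. There exists a constant c = c(d,i,D) such that for every finite pure d-dimensional simplicial complex X in which every vertex is contained in at most D faces, and every α ∈ C^i(X,F_2), there exists a locally minimal cochain α̃ ∈ α + B^i(X,F_2) with ||α̃|| ≤ ||α||, and a cochain γ ∈ C^{i-1}(X,F_2) with α − α̃ = δ_{i-1}(γ) and ||γ|| ≤ c·||α||. -/

import Mathlib

open scoped Classical

structure SComplex (V : Type) [DecidableEq V] where
  faces : Finset (Finset V)
  down_closed : ∀ σ ∈ faces, ∀ τ ⊆ σ, τ ∈ faces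

namespace SComplex

variable {V : Type} [Fintype V] [DecidableEq V]

/-- The faces of cardinality `n` (i.e. of dimension `n-1`). -/
def K (X : SComplex V) (n : ℕ) : Finset (Finset V) := X.faces.filter fun σ => σ.card = n

/-- `X` is pure with all facets (maximal faces) of cardinality `D` (dimension `D-1`). -/
def IsPure (X : SComplex V) (D : ℕ) : Prop :=
  X.faces.Nonempty ∧ ∀ σ ∈ X.faces, ∃ τ ∈ X.faces, σ ⊆ τ ∧ τ.card = D

/-- `F₂`-cochains on the faces of cardinality `n` (the space `C^{n-1}(X,F₂)`). -/
abbrev Cochain (X : SComplex V) (n : ℕ) : Type := ↥(X.K n) → ZMod 2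

/-- The weight of a face `σ` of cardinality `n`, in a complex with facets of cardinality `D`:
`wt(σ) = c(σ) / (C(D,n) · #facets)` where `c(σ)` is the number of facets containing `σ`. -/
noncomputable def wt (X : SComplex V) (D n : ℕ) (σ : Finset V) : ℝ :=
  (((X.K D).filter fun τ => σ ⊆ τ).card : ℝ) / ((D.choose n : ℝ) * ((X.K D).card : ℝ))

/-- The norm `‖α‖ = Σ_{σ : α(σ)≠0} wt(σ)` of a cochain. -/
noncomputable def cnorm (X : SComplex V) (D n : ℕ) (α : X.Cochain n) : ℝ :=
  ∑ σ ∈ (X.K n).attach, if α σ ≠ 0 then X.wt D n σ.1 else 0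

/-- The coboundary map into level `n` (from cochains on faces of cardinality `n-1`). -/
def delta (X : SComplex V) (n : ℕ) (γ : X.Cochain (n - 1)) : X.Cochain n :=
  fun τ => ∑ σ ∈ (X.K (n - 1)).attach, if σ.1 ⊆ τ.1 then γ σ else 0

/-- `α` is a coboundary: `α ∈ B^{n-1}(X,F₂) = Image(δ)`. -/
def IsCobound (X : SComplex V) (n : ℕ) (α : X.Cochain n) : Prop :=
  ∃ γ : X.Cochain (n - 1), X.delta n γ = α

/-- `α` is a cocycle: `α ∈ Z^{n-1}(X,F₂) = Ker(δ)`. -/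
def IsCocycle (X : SComplex V) (n : ℕ) (α : X.Cochain n) : Prop :=
  X.delta (n + 1) α = 0

/-- `‖[α]‖ = min{‖γ‖ : γ ∈ α + B}`. -/
noncomputable def normClassB (X : SComplex V) (D n : ℕ) (α : X.Cochain n) : ℝ :=
  sInf {x : ℝ | ∃ β : X.Cochain n, X.IsCobound n β ∧ x = X.cnorm D n (α + β)}

/-- `‖{α}‖ = min{‖γ‖ : γ ∈ α + Z}`. -/
noncomputable def normClassZ (X : SComplex V) (D n : ℕ) (α : X.Cochain n) : ℝ :=
  sInf {x : ℝ | ∃ β : X.Cochain n, X.IsCocycle n β ∧ x = X.cnorm D n (α + β)}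

/-- The coboundary expansion `ε_{n-1}(X)` (for a complex with facets of cardinality `D`). -/
noncomputable def epsExp (X : SComplex V) (D n : ℕ) : ℝ :=
  sInf {x : ℝ | ∃ α : X.Cochain n, ¬ X.IsCobound n α ∧
    x = X.cnorm D (n + 1) (X.delta (n + 1) α) / X.normClassB D n α}

end SComplex

namespace SComplex

variable {V : Type} [Fintype V] [DecidableEq V]

/-- The link of `X` at a vertex `v`: the faces `σ` with `v ∉ σ` and `σ ∪ {v} ∈ X`. -/
def link (X : SComplex V) (v : V) : SComplex V where
  faces := X.faces.filter fun σ => v ∉ σ ∧ insert v σ ∈ X.faces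
  down_closed := by
    intro σ hσ τ hτ
    simp only [Finset.mem_filter] at hσ ⊢
    exact ⟨X.down_closed σ hσ.1 τ hτ, fun h => hσ.2.1 (hτ h),
      X.down_closed _ hσ.2.2 _ (Finset.insert_subset_insert v hτ)⟩

/-- The cochain `α_v` on the link induced by a cochain `α`: `α_v(σ∖{v}) = α(σ)`. -/
def localize (X : SComplex V) (v : V) (n : ℕ) (α : X.Cochain n) :
    (X.link v).Cochain (n - 1) :=
  fun σ => if h : insert v σ.1 ∈ X.K n then α ⟨insert v σ.1, h⟩ else 0

/-- `α` is minimal: its norm realizes the minimum over its class modulo coboundaries. -/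
def IsMinimal (X : SComplex V) (D n : ℕ) (α : X.Cochain n) : Prop :=
  ∀ γ : X.Cochain (n - 1), X.cnorm D n α ≤ X.cnorm D n (α + X.delta n γ)

/-- `α` is locally minimal: for every vertex `v` the induced cochain `α_v` is a
minimal cochain on the link `X_v` (a pure complex with facets of cardinality `D-1`). -/
def LocallyMinimal (X : SComplex V) (D n : ℕ) (α : X.Cochain n) : Prop :=
  ∀ v : V, (X.link v).IsMinimal (D - 1) (n - 1) (X.localize v n α)

set_option linter.unusedSectionVars false

lemma mem_K_iff {X : SComplex V} {n : ℕ} {σ : Finset V} :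
    σ ∈ X.K n ↔ σ ∈ X.faces ∧ σ.card = n := Finset.mem_filter

lemma mem_link_iff {X : SComplex V} {v : V} {σ : Finset V} :
    σ ∈ (X.link v).faces ↔ σ ∈ X.faces ∧ v ∉ σ ∧ insert v σ ∈ X.faces := Finset.mem_filter

lemma insert_mem_K {X : SComplex V} {v : V} {n : ℕ} {σ : Finset V}
    (h : σ ∈ (X.link v).K n) : insert v σ ∈ X.K (n + 1) := by
  rw [mem_K_iff] at h ⊢
  obtain ⟨h1, h2⟩ := h
  rw [mem_link_iff] at h1
  exact ⟨h1.2.2, by rw [Finset.card_insert_of_notMem h1.2.1, h2]⟩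

lemma erase_mem_linkK {X : SComplex V} {v : V} {n : ℕ} {τ : Finset V}
    (h : τ ∈ X.K (n + 1)) (hv : v ∈ τ) : τ.erase v ∈ (X.link v).K n := by
  rw [mem_K_iff] at h ⊢
  rw [mem_link_iff]
  refine ⟨⟨X.down_closed τ h.1 _ (Finset.erase_subset v τ), Finset.notMem_erase v τ,
    by rw [Finset.insert_erase hv]; exact h.1⟩, ?_⟩
  rw [Finset.card_erase_of_mem hv, h.2]; omega

lemma wt_nonneg (X : SComplex V) (D n : ℕ) (σ : Finset V) : 0 ≤ X.wt D n σ :=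
  div_nonneg (by positivity) (by positivity)

lemma cnorm_nonneg (X : SComplex V) (D n : ℕ) (α : X.Cochain n) : 0 ≤ X.cnorm D n α :=
  Finset.sum_nonneg fun σ _ => by
    split
    · exact X.wt_nonneg D n σ.1
    · exact le_refl 0

lemma cnorm_zero (X : SComplex V) (D n : ℕ) : X.cnorm D n 0 = 0 :=
  Finset.sum_eq_zero fun σ _ => if_neg (fun h => h rfl)

lemma cnorm_add_le (X : SComplex V) (D n : ℕ) (α β : X.Cochain n) :
    X.cnorm D n (α + β) ≤ X.cnorm D n α + X.cnorm D n β := by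
  rw [cnorm, cnorm, cnorm, ← Finset.sum_add_distrib]
  refine Finset.sum_le_sum fun σ _ => ?_
  have hw := X.wt_nonneg D n σ.1
  by_cases h : (α + β) σ ≠ 0
  · rw [if_pos h]
    by_cases ha : α σ ≠ 0
    · rw [if_pos ha]
      split <;> linarith
    · push_neg at ha
      have hb : β σ ≠ 0 := by
        intro hb; apply h; show α σ + β σ = 0; rw [ha, hb, add_zero]
      rw [if_pos hb]
      split <;> linarith
  · rw [if_neg h]
    split <;> split <;> linarith

lemma delta_add (X : SComplex V) (n : ℕ) (γ₁ γ₂ : X.Cochain (n - 1)) :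
    X.delta n (γ₁ + γ₂) = X.delta n γ₁ + X.delta n γ₂ := by
  funext τ
  show _ = X.delta n γ₁ τ + X.delta n γ₂ τ
  rw [delta, delta, delta, ← Finset.sum_add_distrib]
  refine Finset.sum_congr rfl fun σ _ => ?_
  split <;> simp


/-- The integer numerator of the norm. -/
noncomputable def csum (X : SComplex V) (D n : ℕ) (α : X.Cochain n) : ℕ :=
  ∑ σ ∈ (X.K n).attach, if α σ ≠ 0 then ((X.K D).filter fun τ => σ.1 ⊆ τ).card else 0

lemma cnorm_eq_csum (X : SComplex V) (D n : ℕ) (α : X.Cochain n) :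
    X.cnorm D n α = (X.csum D n α : ℝ) / ((D.choose n : ℝ) * ((X.K D).card : ℝ)) := by
  rw [cnorm, csum, Nat.cast_sum, Finset.sum_div]
  refine Finset.sum_congr rfl fun σ _ => ?_
  split
  · rfl
  · rw [Nat.cast_zero, zero_div]

lemma cnorm_quant {X : SComplex V} {D n : ℕ} {α β : X.Cochain n}
    (h : X.cnorm D n β < X.cnorm D n α) :
    X.cnorm D n β + 1 / ((D.choose n : ℝ) * ((X.K D).card : ℝ)) ≤ X.cnorm D n α := by
  set den : ℝ := (D.choose n : ℝ) * ((X.K D).card : ℝ) with hden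
  have hden0 : 0 ≤ den := by positivity
  rcases eq_or_lt_of_le hden0 with he | hpos
  · exfalso
    rw [cnorm_eq_csum, cnorm_eq_csum, ← hden, ← he, div_zero, div_zero] at h
    exact lt_irrefl 0 h
  · rw [cnorm_eq_csum, cnorm_eq_csum, ← hden] at h ⊢
    have hlt : X.csum D n β < X.csum D n α := by
      by_contra hc
      push_neg at hc
      exact absurd (div_le_div_of_nonneg_right (Nat.cast_le.mpr hc) hpos.le) (not_le.mpr h)
    have : (X.csum D n β : ℝ) + 1 ≤ (X.csum D n α : ℝ) := by
      exact_mod_cast Nat.succ_le_of_lt hlt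
    rw [← add_div]
    exact div_le_div_of_nonneg_right this hpos.le

/-- The cone of a link cochain: `γ(σ) = g(σ∖{v})` if `v ∈ σ`, else `0`. -/
noncomputable def cone (X : SComplex V) (v : V) (n : ℕ) (g : (X.link v).Cochain n) :
    X.Cochain (n + 1) :=
  fun σ => if h : σ.1.erase v ∈ (X.link v).K n ∧ v ∈ σ.1 then g ⟨σ.1.erase v, h.1⟩ else 0

lemma cone_apply (X : SComplex V) (v : V) (n : ℕ) (g : (X.link v).Cochain n)
    (σ : {x // x ∈ X.K (n + 1)}) :
    X.cone v n g σ = if h : v ∈ σ.1 then g ⟨σ.1.erase v, X.erase_mem_linkK σ.2 h⟩ else 0 := by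
  rw [cone]
  by_cases h : v ∈ σ.1
  · rw [dif_pos ⟨X.erase_mem_linkK σ.2 h, h⟩, dif_pos h]
  · rw [dif_neg fun hc => h hc.2, dif_neg h]

lemma localize_apply (X : SComplex V) (v : V) (n : ℕ) (β : X.Cochain (n + 1))
    (ρ : {x // x ∈ (X.link v).K n}) :
    X.localize v (n + 1) β ρ = β ⟨insert v ρ.1, X.insert_mem_K ρ.2⟩ := by
  rw [localize]
  have h : insert v ρ.1 ∈ X.K (n + 1) := X.insert_mem_K ρ.2
  rw [dif_pos h]

/-- Master bijection: sums over `(n+1)`-faces containing `v` correspond to sums over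
`n`-faces of the link. -/
lemma sum_link_master {M : Type*} [AddCommMonoid M] (X : SComplex V) (v : V) (n : ℕ)
    (p : Finset V → Prop) [DecidablePred p] (f : Finset V → M) :
    ∑ σ ∈ (X.K (n + 1)).attach.filter (fun σ => v ∈ σ.1 ∧ p σ.1), f σ.1
      = ∑ ρ ∈ ((X.link v).K n).attach.filter (fun ρ => p (insert v ρ.1)), f (insert v ρ.1) := by
  refine Finset.sum_bij' (i := fun σ hσ => ⟨σ.1.erase v, X.erase_mem_linkK σ.2
      (Finset.mem_filter.mp hσ).2.1⟩)
    (j := fun ρ _ => ⟨insert v ρ.1, X.insert_mem_K ρ.2⟩) ?_ ?_ ?_ ?_ ?_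
  · intro σ hσ
    obtain ⟨-, hv, hp⟩ := Finset.mem_filter.mp hσ
    rw [Finset.mem_filter]
    refine ⟨Finset.mem_attach _ _, ?_⟩
    rw [Finset.insert_erase hv]
    exact hp
  · intro ρ hρ
    obtain ⟨-, hp⟩ := Finset.mem_filter.mp hρ
    rw [Finset.mem_filter]
    exact ⟨Finset.mem_attach _ _, Finset.mem_insert_self v _, hp⟩
  · intro σ hσ
    obtain ⟨-, hv, -⟩ := Finset.mem_filter.mp hσ
    exact Subtype.ext (Finset.insert_erase hv)
  · intro ρ hρ
    have hv : v ∉ ρ.1 := (mem_link_iff.mp (mem_K_iff.mp ρ.2).1).2.1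
    exact Subtype.ext (Finset.erase_insert hv)
  · intro σ hσ
    obtain ⟨-, hv, -⟩ := Finset.mem_filter.mp hσ
    rw [Finset.insert_erase hv]


/-- Master bijection without side condition. -/
lemma sum_link {M : Type*} [AddCommMonoid M] (X : SComplex V) (v : V) (n : ℕ)
    (f : Finset V → M) :
    ∑ σ ∈ (X.K (n + 1)).attach.filter (fun σ => v ∈ σ.1), f σ.1
      = ∑ ρ ∈ ((X.link v).K n).attach, f (insert v ρ.1) := by
  refine Finset.sum_bij' (i := fun σ hσ => ⟨σ.1.erase v, X.erase_mem_linkK σ.2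
      (Finset.mem_filter.mp hσ).2⟩)
    (j := fun ρ _ => ⟨insert v ρ.1, X.insert_mem_K ρ.2⟩) ?_ ?_ ?_ ?_ ?_
  · intro σ hσ
    exact Finset.mem_attach _ _
  · intro ρ hρ
    rw [Finset.mem_filter]
    exact ⟨Finset.mem_attach _ _, Finset.mem_insert_self v _⟩
  · intro σ hσ
    exact Subtype.ext (Finset.insert_erase (Finset.mem_filter.mp hσ).2)
  · intro ρ hρ
    have hv : v ∉ ρ.1 := (mem_link_iff.mp (mem_K_iff.mp ρ.2).1).2.1
    exact Subtype.ext (Finset.erase_insert hv)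
  · intro σ hσ
    rw [Finset.insert_erase (Finset.mem_filter.mp hσ).2]

/-- The number of facets of `X` containing `insert v ρ` equals the number of facets of the
link at `v` containing `ρ`. -/
lemma count_erase (X : SComplex V) (v : V) (d : ℕ) (ρ : Finset V) (hv : v ∉ ρ) :
    ((X.K (d + 1)).filter fun τ => insert v ρ ⊆ τ).card
      = (((X.link v).K d).filter fun τ => ρ ⊆ τ).card := by
  refine Finset.card_bij' (i := fun τ _ => τ.erase v) (j := fun τ _ => insert v τ) ?_ ?_ ?_ ?_
  · intro τ hτ
    obtain ⟨hK, hsub⟩ := Finset.mem_filter.mp hτ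
    have hvτ : v ∈ τ := hsub (Finset.mem_insert_self v ρ)
    rw [Finset.mem_filter]
    refine ⟨X.erase_mem_linkK hK hvτ, ?_⟩
    intro x hx
    exact Finset.mem_erase.mpr ⟨fun he => hv (he ▸ hx), hsub (Finset.mem_insert_of_mem hx)⟩
  · intro τ hτ
    obtain ⟨hK, hsub⟩ := Finset.mem_filter.mp hτ
    rw [Finset.mem_filter]
    exact ⟨X.insert_mem_K hK, Finset.insert_subset_insert v hsub⟩
  · intro τ hτ
    obtain ⟨hK, hsub⟩ := Finset.mem_filter.mp hτ
    exact Finset.insert_erase (hsub (Finset.mem_insert_self v ρ))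
  · intro τ hτ
    obtain ⟨hK, -⟩ := Finset.mem_filter.mp hτ
    exact Finset.erase_insert (mem_link_iff.mp (mem_K_iff.mp hK).1).2.1

lemma wt_insert (X : SComplex V) (v : V) (d m : ℕ) (hm : m ≤ d) (ρ : Finset V) (hv : v ∉ ρ) :
    X.wt (d + 1) (m + 1) (insert v ρ)
      = ((d.choose m : ℝ) * (((X.link v).K d).card : ℝ)
          / (((d + 1).choose (m + 1) : ℝ) * ((X.K (d + 1)).card : ℝ)))
        * (X.link v).wt d m ρ := by
  rw [wt, wt, X.count_erase v d ρ hv]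
  set c : ℝ := ((((X.link v).K d).filter fun τ => ρ ⊆ τ).card : ℝ) with hc
  set N' : ℝ := (((X.link v).K d).card : ℝ) with hN'
  set B : ℝ := (d.choose m : ℝ) with hB
  set A : ℝ := (((d + 1).choose (m + 1) : ℝ) * ((X.K (d + 1)).card : ℝ)) with hA
  show c / A = B * N' / A * (c / (B * N'))
  have hcN' : c ≤ N' := by
    rw [hc, hN']
    exact_mod_cast Finset.card_le_card (Finset.filter_subset _ _)
  rcases eq_or_ne A 0 with hA0 | hA0
  · rw [hA0, div_zero, div_zero, zero_mul]
  rcases eq_or_ne (B * N') 0 with hBN | hBN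
  · have hBpos : (0:ℝ) < B := by
      rw [hB]
      exact_mod_cast Nat.choose_pos hm
    have hN0 : N' = 0 := by
      rcases mul_eq_zero.mp hBN with hB0 | hN0
      · exact absurd hB0 (ne_of_gt hBpos)
      · exact hN0
    have hc0 : c = 0 := by
      have h0c : 0 ≤ c := by rw [hc]; positivity
      linarith [hN0 ▸ hcN']
    rw [hc0, zero_div, zero_div, mul_zero]
  · field_simp
    rw [mul_assoc]
    exact (mul_div_cancel_right₀ c hBN).symm

lemma cnorm_eq_off_add (X : SComplex V) (v : V) (D m : ℕ) (β : X.Cochain (m + 1)) :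
    X.cnorm D (m + 1) β =
      (∑ σ ∈ (X.K (m + 1)).attach.filter (fun σ => ¬ v ∈ σ.1),
          if β σ ≠ 0 then X.wt D (m + 1) σ.1 else 0)
      + ∑ ρ ∈ ((X.link v).K m).attach,
          (if X.localize v (m + 1) β ρ ≠ 0 then X.wt D (m + 1) (insert v ρ.1) else 0) := by
  rw [cnorm, ← Finset.sum_filter_add_sum_filter_not (X.K (m+1)).attach (fun σ => v ∈ σ.1),
    add_comm]
  congr 1
  calc (∑ σ ∈ (X.K (m+1)).attach.filter (fun σ => v ∈ σ.1),
          if β σ ≠ 0 then X.wt D (m + 1) σ.1 else 0)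
      = ∑ σ ∈ (X.K (m+1)).attach.filter (fun σ => v ∈ σ.1),
          (fun s => if h : s ∈ X.K (m + 1) then
            (if β ⟨s, h⟩ ≠ 0 then X.wt D (m + 1) s else 0) else 0) σ.1 :=
        Finset.sum_congr rfl fun σ _ => by beta_reduce; rw [dif_pos σ.2]
    _ = ∑ ρ ∈ ((X.link v).K m).attach,
          (fun s => if h : s ∈ X.K (m + 1) then
            (if β ⟨s, h⟩ ≠ 0 then X.wt D (m + 1) s else 0) else 0) (insert v ρ.1) :=
        X.sum_link v m (fun s => if h : s ∈ X.K (m + 1) then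
          (if β ⟨s, h⟩ ≠ 0 then X.wt D (m + 1) s else 0) else 0)
    _ = ∑ ρ ∈ ((X.link v).K m).attach,
          (if X.localize v (m + 1) β ρ ≠ 0 then X.wt D (m + 1) (insert v ρ.1) else 0) :=
        Finset.sum_congr rfl fun ρ _ => by
          beta_reduce; rw [dif_pos (X.insert_mem_K ρ.2), localize_apply]

lemma cnorm_sub_eq (X : SComplex V) (v : V) (d m : ℕ) (hm : m ≤ d)
    (β β' : X.Cochain (m + 1)) (hoff : ∀ σ, v ∉ σ.1 → β σ = β' σ) :
    X.cnorm (d + 1) (m + 1) β' - X.cnorm (d + 1) (m + 1) β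
      = ((d.choose m : ℝ) * (((X.link v).K d).card : ℝ)
          / (((d + 1).choose (m + 1) : ℝ) * ((X.K (d + 1)).card : ℝ)))
        * ((X.link v).cnorm d m (X.localize v (m + 1) β')
            - (X.link v).cnorm d m (X.localize v (m + 1) β)) := by
  rw [X.cnorm_eq_off_add v (d+1) m β, X.cnorm_eq_off_add v (d+1) m β']
  have hofs : (∑ σ ∈ (X.K (m + 1)).attach.filter (fun σ => ¬ v ∈ σ.1),
      if β' σ ≠ 0 then X.wt (d+1) (m + 1) σ.1 else 0)
      = ∑ σ ∈ (X.K (m + 1)).attach.filter (fun σ => ¬ v ∈ σ.1),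
      if β σ ≠ 0 then X.wt (d+1) (m + 1) σ.1 else 0 := by
    refine Finset.sum_congr rfl fun σ hσ => ?_
    rw [hoff σ (Finset.mem_filter.mp hσ).2]
  rw [hofs]
  rw [cnorm, cnorm]
  set κ : ℝ := ((d.choose m : ℝ) * (((X.link v).K d).card : ℝ)
          / (((d + 1).choose (m + 1) : ℝ) * ((X.K (d + 1)).card : ℝ))) with hκ
  have hlk : ∀ (g : (X.link v).Cochain m),
      (∑ ρ ∈ ((X.link v).K m).attach,
        if g ρ ≠ 0 then X.wt (d+1) (m + 1) (insert v ρ.1) else 0)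
      = κ * ∑ ρ ∈ ((X.link v).K m).attach,
          if g ρ ≠ 0 then (X.link v).wt d m ρ.1 else 0 := by
    intro g
    rw [Finset.mul_sum]
    refine Finset.sum_congr rfl fun ρ hρ => ?_
    have hv : v ∉ ρ.1 := (mem_link_iff.mp (mem_K_iff.mp ρ.2).1).2.1
    rw [X.wt_insert v d m hm ρ.1 hv, ← hκ]
    split
    · rfl
    · rw [mul_zero]
  rw [hlk, hlk]
  ring

lemma localize_add (X : SComplex V) (v : V) (m : ℕ) (β β' : X.Cochain (m + 1)) :
    X.localize v (m + 1) (β + β')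
      = X.localize v (m + 1) β + X.localize v (m + 1) β' := by
  funext ρ
  show X.localize v (m + 1) (β + β') ρ
      = X.localize v (m + 1) β ρ + X.localize v (m + 1) β' ρ
  rw [localize_apply, localize_apply, localize_apply]
  rfl

lemma delta_cone_off (X : SComplex V) (v : V) (j : ℕ) (g : (X.link v).Cochain j)
    (τ : {x // x ∈ X.K (j + 2)}) (hv : v ∉ τ.1) :
    X.delta (j + 2) (X.cone v j g) τ = 0 := by
  rw [delta]
  refine Finset.sum_eq_zero fun σ _ => ?_
  split
  · next h =>
    show X.cone v j g σ = 0
    rw [cone]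
    exact dif_neg fun hc => hv (h hc.2)
  · rfl

lemma delta_cone_localize (X : SComplex V) (v : V) (j : ℕ) (g : (X.link v).Cochain j) :
    X.localize v (j + 2) (X.delta (j + 2) (X.cone v j g))
      = (X.link v).delta (j + 1) g := by
  funext ρ
  show X.localize v (j + 2) (X.delta (j + 2) (X.cone v j g)) ρ = _
  rw [localize_apply, delta, delta]
  show (∑ σ ∈ (X.K (j + 1)).attach,
      if σ.1 ⊆ insert v ρ.1 then X.cone v j g σ else 0)
    = ∑ w ∈ ((X.link v).K j).attach, if w.1 ⊆ ρ.1 then g w else 0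
  calc (∑ σ ∈ (X.K (j + 1)).attach,
        if σ.1 ⊆ insert v ρ.1 then X.cone v j g σ else 0)
      = ∑ σ ∈ (X.K (j + 1)).attach,
          (if v ∈ σ.1 ∧ σ.1 ⊆ insert v ρ.1 then
            (fun s => if h : s.erase v ∈ (X.link v).K j then g ⟨s.erase v, h⟩ else 0) σ.1
          else 0) := by
        refine Finset.sum_congr rfl fun σ _ => ?_
        beta_reduce
        rw [cone_apply]
        by_cases hsub : σ.1 ⊆ insert v ρ.1
        · by_cases hvσ : v ∈ σ.1
          · rw [if_pos hsub, if_pos ⟨hvσ, hsub⟩, dif_pos hvσ,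
              dif_pos (X.erase_mem_linkK σ.2 hvσ)]
          · rw [if_pos hsub, dif_neg hvσ, if_neg fun hc => hvσ hc.1]
        · rw [if_neg hsub, if_neg fun hc => hsub hc.2]
    _ = ∑ σ ∈ (X.K (j + 1)).attach.filter (fun σ => v ∈ σ.1 ∧ σ.1 ⊆ insert v ρ.1),
          (fun s => if h : s.erase v ∈ (X.link v).K j then g ⟨s.erase v, h⟩ else 0) σ.1 :=
        (Finset.sum_filter _ _).symm
    _ = ∑ w ∈ ((X.link v).K j).attach.filter (fun w => insert v w.1 ⊆ insert v ρ.1),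
          (fun s => if h : s.erase v ∈ (X.link v).K j then g ⟨s.erase v, h⟩ else 0)
            (insert v w.1) :=
        X.sum_link_master v j (fun s => s ⊆ insert v ρ.1)
          (fun s => if h : s.erase v ∈ (X.link v).K j then g ⟨s.erase v, h⟩ else 0)
    _ = ∑ w ∈ ((X.link v).K j).attach,
          (if insert v w.1 ⊆ insert v ρ.1 then
            (fun s => if h : s.erase v ∈ (X.link v).K j then g ⟨s.erase v, h⟩ else 0)
              (insert v w.1) else 0) := Finset.sum_filter _ _
    _ = ∑ w ∈ ((X.link v).K j).attach, if w.1 ⊆ ρ.1 then g w else 0 := by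
        refine Finset.sum_congr rfl fun w _ => ?_
        beta_reduce
        have hvw : v ∉ w.1 := (mem_link_iff.mp (mem_K_iff.mp w.2).1).2.1
        have hvρ : v ∉ ρ.1 := (mem_link_iff.mp (mem_K_iff.mp ρ.2).1).2.1
        have hiff : insert v w.1 ⊆ insert v ρ.1 ↔ w.1 ⊆ ρ.1 := by
          constructor
          · intro h x hx
            rcases Finset.mem_insert.mp (h (Finset.mem_insert_of_mem hx)) with he | hm
            · exact absurd (he ▸ hx) hvw
            · exact hm
          · exact fun h => Finset.insert_subset_insert v h
        simp only [Finset.erase_insert hvw]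
        by_cases h : w.1 ⊆ ρ.1
        · rw [if_pos (hiff.mpr h), if_pos h, dif_pos w.2]
        · rw [if_neg (fun hc => h (hiff.mp hc)), if_neg h]

lemma cnorm_pos_linkKd {X : SComplex V} {v : V} {d m : ℕ} {g : (X.link v).Cochain m}
    (h : 0 < (X.link v).cnorm d m g) : 0 < ((X.link v).K d).card := by
  by_contra h0
  push_neg at h0
  have hempty : (X.link v).K d = ∅ := Finset.card_eq_zero.mp (Nat.le_zero.mp h0)
  have : (X.link v).cnorm d m g = 0 := by
    refine Finset.sum_eq_zero fun ρ _ => ?_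
    split
    · rw [wt, hempty]
      simp
    · rfl
  rw [this] at h
  exact lt_irrefl 0 h

lemma linkKd_Kd {X : SComplex V} {v : V} {d : ℕ}
    (h : 0 < ((X.link v).K d).card) : 0 < (X.K (d + 1)).card := by
  obtain ⟨τ, hτ⟩ := Finset.card_pos.mp h
  exact Finset.card_pos.mpr ⟨insert v τ, X.insert_mem_K hτ⟩

lemma local_step (X : SComplex V) (v : V) (d j : ℕ) (hj : j + 1 ≤ d)
    (α : X.Cochain (j + 2))
    (hnm : ¬ (X.link v).IsMinimal d (j + 1) (X.localize v (j + 2) α)) :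
    ∃ g : (X.link v).Cochain j,
      X.cnorm (d + 1) (j + 2) (α + X.delta (j + 2) (X.cone v j g))
        < X.cnorm (d + 1) (j + 2) α := by
  rw [IsMinimal] at hnm
  push_neg at hnm
  obtain ⟨g, hg⟩ := hnm
  refine ⟨g, ?_⟩
  set β' := α + X.delta (j + 2) (X.cone v j g) with hβ'
  have hoff : ∀ σ, v ∉ σ.1 → α σ = β' σ := by
    intro σ hvσ
    show α σ = α σ + X.delta (j + 2) (X.cone v j g) σ
    rw [X.delta_cone_off v j g σ hvσ, add_zero]
  have hloc : X.localize v (j + 2) β'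
      = (show (X.link v).Cochain (j + 1) from X.localize v (j + 2) α)
        + (X.link v).delta (j + 1) g := by
    rw [hβ', X.localize_add v (j + 1) α _, X.delta_cone_localize v j g]
  have hsub := X.cnorm_sub_eq v d (j + 1) hj α β' hoff
  rw [hloc] at hsub
  have hgpos : 0 < (X.link v).cnorm d (j + 1) (X.localize v (j + 2) α) :=
    lt_of_le_of_lt ((X.link v).cnorm_nonneg d (j + 1) _) hg
  have hN' : 0 < (((X.link v).K d).card : ℝ) := by
    exact_mod_cast cnorm_pos_linkKd hgpos
  have hN : 0 < ((X.K (d + 1)).card : ℝ) := by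
    have := linkKd_Kd (X := X) (v := v) (d := d) (by exact_mod_cast hN')
    exact_mod_cast this
  have hB : (0:ℝ) < (d.choose (j + 1) : ℝ) := by
    exact_mod_cast Nat.choose_pos hj
  have hA : (0:ℝ) < ((d + 1).choose (j + 2) : ℝ) := by
    exact_mod_cast Nat.choose_pos (by omega : j + 2 ≤ d + 1)
  have hκ : 0 < (d.choose (j+1) : ℝ) * (((X.link v).K d).card : ℝ)
      / (((d + 1).choose (j + 2) : ℝ) * ((X.K (d + 1)).card : ℝ)) :=
    div_pos (mul_pos hB hN') (mul_pos hA hN)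
  nlinarith [hsub, hg, hκ]

lemma cone_norm_bound (X : SComplex V) (v : V) (d j D₀ : ℕ)
    (hdeg : (X.faces.filter fun σ => v ∈ σ).card ≤ D₀) (g : (X.link v).Cochain j) :
    X.cnorm (d + 1) (j + 1) (X.cone v j g)
      ≤ (D₀ : ℝ) * ((D₀ : ℝ) / (((d + 1).choose (j + 1) : ℝ) * ((X.K (d + 1)).card : ℝ))) := by
  rw [cnorm]
  set bnd : ℝ := (D₀ : ℝ) / (((d + 1).choose (j + 1) : ℝ) * ((X.K (d + 1)).card : ℝ)) with hbnd
  have hbnd0 : 0 ≤ bnd := by positivity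
  calc (∑ σ ∈ (X.K (j + 1)).attach,
        if X.cone v j g σ ≠ 0 then X.wt (d + 1) (j + 1) σ.1 else 0)
      ≤ ∑ σ ∈ (X.K (j + 1)).attach,
          (if v ∈ σ.1 then X.wt (d + 1) (j + 1) σ.1 else 0) := by
        refine Finset.sum_le_sum fun σ _ => ?_
        by_cases hc : X.cone v j g σ ≠ 0
        · have hv : v ∈ σ.1 := by
            by_contra hv
            apply hc
            rw [cone]
            exact dif_neg fun h => hv h.2
          rw [if_pos hc, if_pos hv]
        · rw [if_neg hc]
          split
          · exact X.wt_nonneg _ _ _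
          · exact le_refl 0
    _ = ∑ σ ∈ (X.K (j + 1)).attach.filter (fun σ => v ∈ σ.1), X.wt (d + 1) (j + 1) σ.1 :=
        (Finset.sum_filter _ _).symm
    _ ≤ ∑ σ ∈ (X.K (j + 1)).attach.filter (fun σ => v ∈ σ.1), bnd := by
        refine Finset.sum_le_sum fun σ hσ => ?_
        have hv : v ∈ σ.1 := (Finset.mem_filter.mp hσ).2
        have hcle : (((X.K (d + 1)).filter fun τ => σ.1 ⊆ τ).card : ℝ) ≤ (D₀ : ℝ) := by
          have h1 : ((X.K (d + 1)).filter fun τ => σ.1 ⊆ τ)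
              ⊆ X.faces.filter fun τ => v ∈ τ := by
            intro τ hτ
            obtain ⟨hK, hsub⟩ := Finset.mem_filter.mp hτ
            exact Finset.mem_filter.mpr ⟨(mem_K_iff.mp hK).1, hsub hv⟩
          exact_mod_cast le_trans (Finset.card_le_card h1) hdeg
        rw [wt, hbnd]
        rcases eq_or_lt_of_le (by positivity :
            (0:ℝ) ≤ (((d + 1).choose (j + 1) : ℝ) * ((X.K (d + 1)).card : ℝ))) with he | hpos
        · rw [← he, div_zero, div_zero]
        · exact div_le_div_of_nonneg_right hcle hpos.le
    _ = ((X.K (j + 1)).attach.filter (fun σ => v ∈ σ.1)).card • bnd := by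
        rw [Finset.sum_const]
    _ ≤ (D₀ : ℝ) * bnd := by
        rw [nsmul_eq_mul]
        refine mul_le_mul_of_nonneg_right ?_ hbnd0
        have h2 : ((X.K (j + 1)).attach.filter (fun σ => v ∈ σ.1)).card
            ≤ (X.faces.filter fun σ => v ∈ σ).card := by
          refine Finset.card_le_card_of_injOn (fun σ => σ.1) ?_ ?_
          · intro σ hσ
            exact Finset.mem_filter.mpr ⟨(mem_K_iff.mp σ.2).1, (Finset.mem_filter.mp hσ).2⟩
          · intro a _ b _ hab
            exact Subtype.ext hab
        exact_mod_cast le_trans h2 hdeg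

lemma delta_zero (X : SComplex V) (n : ℕ) : X.delta n (0 : X.Cochain (n - 1)) = 0 := by
  funext τ
  show (∑ σ ∈ (X.K (n - 1)).attach, if σ.1 ⊆ τ.1 then (0 : X.Cochain (n-1)) σ else 0) = 0
  refine Finset.sum_eq_zero fun σ _ => ?_
  split <;> rfl

end SComplex

/-- Let `d ≥ 1`, `1 ≤ i ≤ d`, `D ∈ ℕ`.  There is a constant `c = c(d,i,D)`
such that for every finite pure `d`-dimensional simplicial complex `X` in which every vertex
lies in at most `D` faces, and every `α ∈ C^i(X,F₂)`, there are a locally minimal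
`α̃ ∈ α + B^i(X,F₂)` with `‖α̃‖ ≤ ‖α‖` and `γ ∈ C^{i-1}(X,F₂)` with `α − α̃ = δ_{i-1} γ`
and `‖γ‖ ≤ c·‖α‖`. -/
theorem exists_locally_minimal_representative
    (d i D : ℕ) (hd : 1 ≤ d) (hi1 : 1 ≤ i) (hid : i ≤ d) :
    ∃ c : ℝ, ∀ (V : Type) [Fintype V] [DecidableEq V] (X : SComplex V),
      X.IsPure (d + 1) →
      (∀ v : V, (X.faces.filter fun σ => v ∈ σ).card ≤ D) →
      ∀ α : X.Cochain (i + 1),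
        ∃ (αt : X.Cochain (i + 1)) (γ : X.Cochain i),
          X.LocallyMinimal (d + 1) (i + 1) αt ∧
          X.cnorm (d + 1) (i + 1) αt ≤ X.cnorm (d + 1) (i + 1) α ∧
          α - αt = X.delta (i + 1) γ ∧
          X.cnorm (d + 1) i γ ≤ c * X.cnorm (d + 1) (i + 1) α := by
  obtain ⟨j, rfl⟩ : ∃ j, i = j + 1 := ⟨i - 1, by omega⟩
  set c : ℝ := (D : ℝ) * (D : ℝ) * ((d + 1).choose (j + 2) : ℝ) / ((d + 1).choose (j + 1) : ℝ)
    with hc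
  have hC1 : (0:ℝ) < ((d + 1).choose (j + 1) : ℝ) := by
    exact_mod_cast Nat.choose_pos (by omega : j + 1 ≤ d + 1)
  have hC2 : (0:ℝ) < ((d + 1).choose (j + 2) : ℝ) := by
    exact_mod_cast Nat.choose_pos (by omega : j + 2 ≤ d + 1)
  have hc0 : 0 ≤ c := by rw [hc]; positivity
  refine ⟨c, ?_⟩
  intro V _ _ X hpure hdeg α
  -- the number of facets is positive
  have hN : 0 < ((X.K (d + 1)).card : ℝ) := by
    obtain ⟨⟨σ0, hσ0⟩, hp⟩ := hpure
    obtain ⟨τ, hτf, -, hcard⟩ := hp σ0 hσ0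
    have : τ ∈ X.K (d + 1) := SComplex.mem_K_iff.mpr ⟨hτf, hcard⟩
    exact_mod_cast Finset.card_pos.mpr ⟨τ, this⟩
  have main : ∀ n : ℕ, ∀ α : X.Cochain (j + 2),
      (Finset.univ.filter (fun β : X.Cochain (j + 2) =>
        X.cnorm (d + 1) (j + 2) β < X.cnorm (d + 1) (j + 2) α)).card ≤ n →
      ∃ (αt : X.Cochain (j + 2)) (γ : X.Cochain (j + 1)),
        X.LocallyMinimal (d + 1) (j + 2) αt ∧
        X.cnorm (d + 1) (j + 2) αt ≤ X.cnorm (d + 1) (j + 2) α ∧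
        α - αt = X.delta (j + 2) γ ∧
        X.cnorm (d + 1) (j + 1) γ
          ≤ c * (X.cnorm (d + 1) (j + 2) α - X.cnorm (d + 1) (j + 2) αt) := by
    intro n
    induction n with
    | zero =>
      intro α h0
      by_cases hlm : X.LocallyMinimal (d + 1) (j + 2) α
      · refine ⟨α, 0, hlm, le_refl _, by rw [sub_self, X.delta_zero], ?_⟩
        rw [X.cnorm_zero, sub_self, mul_zero]
      · exfalso
        rw [SComplex.LocallyMinimal] at hlm
        push_neg at hlm
        obtain ⟨v, hv⟩ := hlm
        obtain ⟨g, hgdec⟩ := X.local_step v d j (by omega) α hv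
        have : 0 < (Finset.univ.filter (fun β : X.Cochain (j + 2) =>
            X.cnorm (d + 1) (j + 2) β < X.cnorm (d + 1) (j + 2) α)).card :=
          Finset.card_pos.mpr ⟨_, Finset.mem_filter.mpr ⟨Finset.mem_univ _, hgdec⟩⟩
        omega
    | succ n ih =>
      intro α hcard
      by_cases hlm : X.LocallyMinimal (d + 1) (j + 2) α
      · refine ⟨α, 0, hlm, le_refl _, by rw [sub_self, X.delta_zero], ?_⟩
        rw [X.cnorm_zero, sub_self, mul_zero]
      · rw [SComplex.LocallyMinimal] at hlm
        push_neg at hlm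
        obtain ⟨v, hv⟩ := hlm
        obtain ⟨g, hgdec⟩ := X.local_step v d j (by omega) α hv
        set α' := α + X.delta (j + 2) (X.cone v j g) with hα'
        have hss : (Finset.univ.filter (fun β : X.Cochain (j + 2) =>
            X.cnorm (d + 1) (j + 2) β < X.cnorm (d + 1) (j + 2) α'))
            ⊂ (Finset.univ.filter (fun β : X.Cochain (j + 2) =>
            X.cnorm (d + 1) (j + 2) β < X.cnorm (d + 1) (j + 2) α)) := by
          constructor
          · intro β hβ
            obtain ⟨-, hβlt⟩ := Finset.mem_filter.mp hβ
            exact Finset.mem_filter.mpr ⟨Finset.mem_univ _, lt_trans hβlt hgdec⟩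
          · intro hsup
            have h1 : α' ∈ Finset.univ.filter (fun β : X.Cochain (j + 2) =>
                X.cnorm (d + 1) (j + 2) β < X.cnorm (d + 1) (j + 2) α) :=
              Finset.mem_filter.mpr ⟨Finset.mem_univ _, hgdec⟩
            have h2 := Finset.mem_filter.mp (hsup h1)
            exact lt_irrefl _ h2.2
        obtain ⟨αt, γ₂, h1, h2, h3, h4⟩ := ih α'
          (by have := Finset.card_lt_card hss; omega)
        have hquant := SComplex.cnorm_quant hgdec
        have hcone := X.cone_norm_bound v d j D (hdeg v) g
        refine ⟨αt, X.cone v j g + γ₂, h1, le_trans h2 (le_of_lt hgdec), ?_, ?_⟩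
        · rw [X.delta_add]
          funext τ
          have h3τ := congrFun h3 τ
          show α τ - αt τ = X.delta (j + 2) (X.cone v j g) τ + X.delta (j + 2) γ₂ τ
          have h3τ' : α' τ - αt τ = X.delta (j + 2) γ₂ τ := h3τ
          have hα'τ : α' τ = α τ + X.delta (j + 2) (X.cone v j g) τ := rfl
          have h2z : (2 : ZMod 2) = 0 := by decide
          rw [← h3τ', hα'τ]
          linear_combination (-(X.delta (j + 2) (X.cone v j g) τ)) * h2z
        · have htri := X.cnorm_add_le (d + 1) (j + 1) (X.cone v j g) γ₂
          have harith : c * (1 / (((d + 1).choose (j + 2) : ℝ) * ((X.K (d + 1)).card : ℝ)))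
              = (D : ℝ) * ((D : ℝ) / (((d + 1).choose (j + 1) : ℝ)
                  * ((X.K (d + 1)).card : ℝ))) := by
            rw [hc]
            field_simp
          have hmono : c * (1 / (((d + 1).choose (j + 2) : ℝ) * ((X.K (d + 1)).card : ℝ)))
              ≤ c * (X.cnorm (d + 1) (j + 2) α - X.cnorm (d + 1) (j + 2) α') :=
            mul_le_mul_of_nonneg_left (by linarith) hc0
          linarith
  obtain ⟨αt, γ, h1, h2, h3, h4⟩ := main (Finset.univ.filter (fun β : X.Cochain (j + 2) =>
      X.cnorm (d + 1) (j + 2) β < X.cnorm (d + 1) (j + 2) α)).card α (le_refl _)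
  refine ⟨αt, γ, h1, h2, h3, ?_⟩
  have hnn := X.cnorm_nonneg (d + 1) (j + 2) αt
  nlinarith
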